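/- arXiv:1810.06479 — 3 statements merged into one kernel-verified Lean document; each statement's English description precedes it below -/
import Mathlib

section
/- Let a > 0 and let x, y ∈ ℝ² satisfy ‖x − y‖ ≤ 2a. Then the two-dimensional Lebesgue measure of B(y,a) \ B(x,a) is at least (π·a/2)·‖x − y‖. -/
open MeasureTheory Real

set_option maxHeartbeats 1000000

theorem stmt9 (a : ℝ) (ha : 0 < a) (x y : EuclideanSpace ℝ (Fin 2))
    (hxy : ‖x - y‖ ≤ 2 * a) :
    π * a / 2 * ‖x - y‖ ≤
      (volume (Metric.closedBall y a \ Metric.closedBall x a)).toReal := by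
  rcases eq_or_lt_of_le (norm_nonneg (x - y)) with h0 | h0
  · rw [← h0]; simpa using ENNReal.toReal_nonneg
  set d : ℝ := ‖x - y‖ with hdd
  have hd2a : d ≤ 2 * a := hxy
  -- an orthonormal frame adapted to `y - x`
  obtain ⟨u, v, hnu, hnv, hvu, hyx⟩ : ∃ u v : EuclideanSpace ℝ (Fin 2),
      ‖u‖ = 1 ∧ ‖v‖ = 1 ∧ inner ℝ v u = 0 ∧ y - x = d • u := by
    refine ⟨d⁻¹ • (y - x), (WithLp.equiv 2 (Fin 2 → ℝ)).symm
      ![-(d⁻¹ • (y - x)) 1, (d⁻¹ • (y - x)) 0], ?_, ?_, ?_, ?_⟩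
    · rw [norm_smul, norm_sub_rev, norm_inv, Real.norm_eq_abs, abs_of_pos h0, ← hdd,
        inv_mul_cancel₀ h0.ne']
    · have h1 : ‖d⁻¹ • (y - x)‖ = 1 := by
        rw [norm_smul, norm_sub_rev, norm_inv, Real.norm_eq_abs, abs_of_pos h0, ← hdd,
          inv_mul_cancel₀ h0.ne']
      set w := d⁻¹ • (y - x) with hw
      have h2 : w 0 ^ 2 + w 1 ^ 2 = 1 := by
        rw [EuclideanSpace.norm_eq, Fin.sum_univ_two, Real.sqrt_eq_one] at h1
        simpa [Real.norm_eq_abs, sq_abs] using h1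
      rw [EuclideanSpace.norm_eq, Fin.sum_univ_two, Real.sqrt_eq_one]
      simp only [WithLp.equiv_symm_apply, PiLp.toLp_apply, Matrix.cons_val_zero, Matrix.cons_val_one,
        Matrix.head_cons, Real.norm_eq_abs, sq_abs]
      nlinarith [h2]
    · set w := d⁻¹ • (y - x) with hw
      rw [PiLp.inner_apply, Fin.sum_univ_two]
      simp only [WithLp.equiv_symm_apply, PiLp.toLp_apply, Matrix.cons_val_zero, Matrix.cons_val_one,
        Matrix.head_cons, RCLike.inner_apply, conj_trivial]
      ring
    · rw [smul_smul, mul_inv_cancel₀ h0.ne', one_smul]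
  -- an orthonormal basis with `B 0 = v`, `B 1 = u`
  obtain ⟨B, hB0, hB1⟩ : ∃ B : OrthonormalBasis (Fin 2) ℝ (EuclideanSpace ℝ (Fin 2)),
      B 0 = v ∧ B 1 = u := by
    have hON : Orthonormal ℝ ![v, u] := by
      constructor
      · intro i; fin_cases i <;> simpa [hnv, hnu]
      · intro i j hij
        fin_cases i <;> fin_cases j <;>
          simp_all [real_inner_comm v u]
    have hsp : Submodule.span ℝ (Set.range ![v, u]) = ⊤ :=
      LinearIndependent.span_eq_top_of_card_eq_finrank hON.linearIndependent
        (by simp [finrank_euclideanSpace_fin])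
    exact ⟨OrthonormalBasis.mk hON hsp.ge, by simp [OrthonormalBasis.coe_mk],
      by simp [OrthonormalBasis.coe_mk]⟩
  -- the measure-preserving parametrization
  obtain ⟨ψ, hψmp, hψ⟩ : ∃ ψ : ℝ × ℝ → EuclideanSpace ℝ (Fin 2),
      MeasurePreserving ψ volume volume ∧
        ∀ p : ℝ × ℝ, ψ p = y + (p.1 • v + p.2 • u) := by
    refine ⟨fun p => y + B.repr.symm ((MeasurableEquiv.toLp 2 (Fin 2 → ℝ))
      (MeasurableEquiv.finTwoArrow.symm p)), ?_, ?_⟩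
    · exact (measurePreserving_add_left volume y).comp
        (B.measurePreserving_repr_symm.comp
          (((EuclideanSpace.volume_preserving_symm_measurableEquiv_toLp (Fin 2)).symm _).comp
            ((volume_preserving_finTwoArrow ℝ).symm _)))
    · intro p
      simp only [← B.sum_repr_symm, Fin.sum_univ_two, hB0, hB1]
      rfl
  -- norms in the rotated frame
  have hnorm : ∀ t s : ℝ, ‖t • v + s • u‖ ^ 2 = t ^ 2 + s ^ 2 := by
    intro t s
    rw [norm_add_sq_real, norm_smul, norm_smul, real_inner_smul_left, real_inner_smul_right,
      hvu, hnv, hnu]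
    simp [Real.norm_eq_abs, mul_pow, sq_abs]
  -- the region between graphs sits inside the crescent
  set f : ℝ → ℝ := fun t => (1 - d / a) * Real.sqrt (a ^ 2 - t ^ 2) with hf
  set g : ℝ → ℝ := fun t => Real.sqrt (a ^ 2 - t ^ 2) with hg
  have hsub : regionBetween f g (Set.Ioo (-a) a) ⊆
      ψ ⁻¹' (Metric.closedBall y a \ Metric.closedBall x a) := by
    rintro ⟨t, s⟩ ⟨ht, hs⟩
    simp only [Set.mem_Ioo] at ht hs
    have hta : t ^ 2 < a ^ 2 := by nlinarith [ht.1, ht.2]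
    set c : ℝ := Real.sqrt (a ^ 2 - t ^ 2) with hc
    have hc2 : c ^ 2 = a ^ 2 - t ^ 2 := Real.sq_sqrt (by nlinarith)
    have hc0 : 0 ≤ c := Real.sqrt_nonneg _
    have hca : c ≤ a := by nlinarith
    have hs1 : s < c := hs.2
    have hs2 : (1 - d / a) * c < s := hs.1
    have hkey : (d / a) * a = d := by field_simp
    have hsc : -c ≤ s := by nlinarith [mul_nonneg (mul_nonneg (sub_nonneg.2 hd2a) hc0) ha.le]
    have hψy : ψ (t, s) - y = t • v + s • u := by rw [hψ]; abel
    have hψx : ψ (t, s) - x = t • v + (s + d) • u := by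
      have h1 : ψ (t, s) - x = (y - x) + (t • v + s • u) := by rw [hψ]; abel
      rw [h1, hyx, add_smul]
      abel
    rw [Set.mem_preimage, Set.mem_diff]
    constructor
    · -- in closedBall y a
      rw [Metric.mem_closedBall, dist_eq_norm, hψy]
      have h2 : ‖t • v + s • u‖ ^ 2 ≤ a ^ 2 := by rw [hnorm]; nlinarith
      nlinarith [norm_nonneg (t • v + s • u)]
    · -- not in closedBall x a
      simp only [Metric.mem_closedBall, not_le, dist_eq_norm]
      rw [hψx]
      have hsd : c < s + d := by nlinarith [mul_nonneg (div_nonneg h0.le ha.le) (sub_nonneg.2 hca), hkey]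
      have h2 : a ^ 2 < ‖t • v + (s + d) • u‖ ^ 2 := by rw [hnorm]; nlinarith
      nlinarith [norm_nonneg (t • v + (s + d) • u), ha]
  -- the volume of the region between graphs
  have hgcont : Continuous g := Real.continuous_sqrt.comp (by fun_prop)
  have hfcont : Continuous f := continuous_const.mul hgcont
  have hreg : volume (regionBetween f g (Set.Ioo (-a) a)) = ENNReal.ofReal (π * a / 2 * d) := by
    rw [Measure.volume_eq_prod, volume_regionBetween_eq_integral
      ((hfcont.integrableOn_Ioc).mono_set Set.Ioo_subset_Ioc_self)
      ((hgcont.integrableOn_Ioc).mono_set Set.Ioo_subset_Ioc_self)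
      measurableSet_Ioo
      (fun t _ => by
        have := Real.sqrt_nonneg (a ^ 2 - t ^ 2)
        have hda : 0 ≤ d / a := div_nonneg h0.le ha.le
        simp only [hf, hg]
        nlinarith)]
    congr 1
    have hgf : ∀ t : ℝ, (g - f) t = (d / a) * Real.sqrt (a ^ 2 - t ^ 2) := by
      intro t; simp only [Pi.sub_apply, hf, hg]; ring
    have key : ∫ t in (-a)..a, Real.sqrt (a ^ 2 - t ^ 2) = a ^ 2 * (π / 2) := by
      have h1 := intervalIntegral.integral_comp_mul_left
        (a := (-1:ℝ)) (b := (1:ℝ)) (fun t => Real.sqrt (a ^ 2 - t ^ 2)) (c := a) ha.ne'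
      have h2 : ∀ z : ℝ, Real.sqrt (a ^ 2 - (a * z) ^ 2) = a * Real.sqrt (1 - z ^ 2) := by
        intro z
        rw [show a ^ 2 - (a * z) ^ 2 = a ^ 2 * (1 - z ^ 2) by ring,
          Real.sqrt_mul (sq_nonneg a), Real.sqrt_sq ha.le]
      simp only [h2] at h1
      rw [intervalIntegral.integral_const_mul, integral_sqrt_one_sub_sq] at h1
      rw [show a * (-1 : ℝ) = -a by ring, show a * (1 : ℝ) = a by ring] at h1
      simp only [smul_eq_mul] at h1
      calc ∫ t in (-a)..a, Real.sqrt (a ^ 2 - t ^ 2)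
          = a * (a⁻¹ * ∫ t in (-a)..a, Real.sqrt (a ^ 2 - t ^ 2)) := by
            rw [← mul_assoc, mul_inv_cancel₀ ha.ne', one_mul]
        _ = a * (a * (π / 2)) := by rw [← h1]
        _ = a ^ 2 * (π / 2) := by ring
    calc ∫ t in Set.Ioo (-a) a, (g - f) t
        = ∫ t in Set.Ioo (-a) a, (d / a) * Real.sqrt (a ^ 2 - t ^ 2) := by
          exact integral_congr_ae (Filter.Eventually.of_forall fun t => hgf t)
      _ = (d / a) * ∫ t in Set.Ioo (-a) a, Real.sqrt (a ^ 2 - t ^ 2) := by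
          rw [integral_const_mul]
      _ = (d / a) * ∫ t in (-a)..a, Real.sqrt (a ^ 2 - t ^ 2) := by
          rw [intervalIntegral.integral_of_le (by linarith), integral_Ioc_eq_integral_Ioo]
      _ = (d / a) * (a ^ 2 * (π / 2)) := by rw [key]
      _ = π * a / 2 * d := by field_simp
  -- put everything together
  have hmono := measure_mono (μ := (volume : Measure (ℝ × ℝ))) hsub
  rw [hψmp.measure_preimage
    ((measurableSet_closedBall.diff measurableSet_closedBall).nullMeasurableSet), hreg] at hmono
  have hfin : volume (Metric.closedBall y a \ Metric.closedBall x a) ≠ ⊤ :=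
    ((measure_mono Set.diff_subset).trans_lt measure_closedBall_lt_top).ne
  calc π * a / 2 * d = (ENNReal.ofReal (π * a / 2 * d)).toReal :=
        (ENNReal.toReal_ofReal (by positivity)).symm
    _ ≤ _ := ENNReal.toReal_mono hfin hmono
end

section
/- Let a > 0 and define φ : [0, 2a] → ℝ by φ(d) = (two-dimensional Lebesgue measure of B((d,0), a) \ B((0,0), a)). Then φ is concave on [0, 2a], φ(0) = 0, and φ(2a) = π·a². -/
open MeasureTheory Real

/-- The point `(d, 0)` of the Euclidean plane. -/
noncomputable def pt (d : ℝ) : EuclideanSpace ℝ (Fin 2) :=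
  (EuclideanSpace.equiv (Fin 2) ℝ).symm ![d, 0]

/-- `φ a d` is the area of `B((d,0),a) \ B((0,0),a)`. -/
noncomputable def phi (a d : ℝ) : ℝ :=
  (volume (Metric.closedBall (pt d) a \ Metric.closedBall (pt 0) a)).toReal

namespace Stmt10Aux

noncomputable def hfun (a x : ℝ) : ℝ := 2 * Real.sqrt (a ^ 2 - x ^ 2)

lemma hfun_cont (a : ℝ) : Continuous (hfun a) := by
  unfold hfun; fun_prop

lemma hfun_nonneg (a x : ℝ) : 0 ≤ hfun a x := by
  unfold hfun; positivity

lemma hfun_zero {a x : ℝ} (h : a ^ 2 ≤ x ^ 2) : hfun a x = 0 := by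
  unfold hfun
  rw [Real.sqrt_eq_zero'.mpr (by linarith)]
  ring

lemma hfun_mono {a x y : ℝ} (h : x ^ 2 ≤ y ^ 2) : hfun a y ≤ hfun a x := by
  unfold hfun
  have := Real.sqrt_le_sqrt (show a ^ 2 - y ^ 2 ≤ a ^ 2 - x ^ 2 by linarith)
  linarith

lemma vol_interval (c : ℝ) : volume {y : ℝ | y ^ 2 ≤ c} = ENNReal.ofReal (2 * Real.sqrt c) := by
  rcases le_or_gt 0 c with hc | hc
  · have : {y : ℝ | y ^ 2 ≤ c} = Set.Icc (-Real.sqrt c) (Real.sqrt c) := by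
      ext y
      simpa [Set.mem_Icc] using Real.sq_le hc
    rw [this, Real.volume_Icc]
    congr 1
    ring
  · have h0 : {y : ℝ | y ^ 2 ≤ c} = ∅ := by
      ext y
      simp only [Set.mem_setOf_eq, Set.mem_empty_iff_false, iff_false, not_le]
      exact lt_of_lt_of_le hc (sq_nonneg y)
    rw [h0, measure_empty, Real.sqrt_eq_zero'.mpr hc.le]
    simp

lemma subset_interval {c1 c2 : ℝ} (h : c1 ≤ c2) :
    {y : ℝ | y ^ 2 ≤ c1} ⊆ {y : ℝ | y ^ 2 ≤ c2} := fun y hy => le_trans hy h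

lemma vol_interval_diff (c1 c2 : ℝ) :
    volume ({y : ℝ | y ^ 2 ≤ c1} \ {y : ℝ | y ^ 2 ≤ c2}) =
      ENNReal.ofReal (2 * Real.sqrt c1 - 2 * Real.sqrt c2) := by
  rcases le_or_gt c2 c1 with h | h
  · rw [measure_diff (subset_interval h)
      (measurableSet_le (by fun_prop) measurable_const).nullMeasurableSet
      (by rw [vol_interval]; exact ENNReal.ofReal_ne_top),
      vol_interval, vol_interval, ← ENNReal.ofReal_sub _ (by positivity)]
  · have : {y : ℝ | y ^ 2 ≤ c1} \ {y : ℝ | y ^ 2 ≤ c2} = ∅ :=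
      Set.diff_eq_empty.mpr (subset_interval h.le)
    rw [this, measure_empty, Eq.comm, ENNReal.ofReal_eq_zero]
    nlinarith [Real.sqrt_le_sqrt h.le]

lemma closedBall_preimage' (a d : ℝ) (ha : 0 ≤ a) :
    Metric.closedBall (pt d) a =
      (fun x : EuclideanSpace ℝ (Fin 2) => (x 0, x 1)) ⁻¹'
        {p : ℝ × ℝ | (p.1 - d) ^ 2 + p.2 ^ 2 ≤ a ^ 2} := by
  ext x
  simp only [Metric.mem_closedBall, Set.mem_preimage, Set.mem_setOf_eq]
  rw [EuclideanSpace.dist_eq, Real.sqrt_le_left ha, Fin.sum_univ_two]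
  have h0 : pt d 0 = d := rfl
  have h1 : pt d 1 = 0 := rfl
  rw [h0, h1, Real.dist_eq, Real.dist_eq, sq_abs, sq_abs, sub_zero]

lemma phi_eq {a : ℝ} (ha : 0 < a) {d : ℝ} (hd0 : 0 ≤ d) (hd2 : d ≤ 2 * a) :
    phi a d = ∫ x in (-(d / 2))..(d / 2), hfun a x := by
  have hU : ∀ c : ℝ, MeasurableSet {p : ℝ × ℝ | (p.1 - c) ^ 2 + p.2 ^ 2 ≤ a ^ 2} :=
    fun c => measurableSet_le (by fun_prop) measurable_const
  set g : ℝ → ℝ := fun x => hfun a (x - d) - hfun a x with hg_def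
  have hg_cont : Continuous g := by
    apply Continuous.sub
    · exact (hfun_cont a).comp (by fun_prop)
    · exact hfun_cont a
  -- step 1 & 2: volume as lintegral of slices
  have step12 : volume (Metric.closedBall (pt d) a \ Metric.closedBall (pt 0) a)
      = ∫⁻ x : ℝ, ENNReal.ofReal (g x) := by
    rw [closedBall_preimage' a d ha.le, closedBall_preimage' a 0 ha.le, ← Set.preimage_diff]
    rw [show (fun x : EuclideanSpace ℝ (Fin 2) => (x 0, x 1))
        = (⇑(MeasurableEquiv.finTwoArrow (α := ℝ)) ∘
            ⇑(MeasurableEquiv.toLp 2 (Fin 2 → ℝ)).symm) from rfl]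
    rw [((volume_preserving_finTwoArrow ℝ).comp
        (EuclideanSpace.volume_preserving_symm_measurableEquiv_toLp (Fin 2))).measure_preimage
        (((hU d).diff (hU 0)).nullMeasurableSet)]
    rw [Measure.volume_eq_prod, Measure.prod_apply ((hU d).diff (hU 0))]
    apply lintegral_congr
    intro x
    have hslice : Prod.mk x ⁻¹'
        ({p : ℝ × ℝ | (p.1 - d) ^ 2 + p.2 ^ 2 ≤ a ^ 2} \
          {p : ℝ × ℝ | (p.1 - 0) ^ 2 + p.2 ^ 2 ≤ a ^ 2})
        = {y : ℝ | y ^ 2 ≤ a ^ 2 - (x - d) ^ 2} \ {y : ℝ | y ^ 2 ≤ a ^ 2 - x ^ 2} := by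
      ext y
      simp only [Set.mem_preimage, Set.mem_diff, Set.mem_setOf_eq, sub_zero]
      constructor
      · rintro ⟨h1, h2⟩
        exact ⟨by linarith, fun hh => h2 (by linarith)⟩
      · rintro ⟨h1, h2⟩
        exact ⟨by linarith, fun hh => h2 (by linarith)⟩
    rw [hslice, vol_interval_diff]
    rfl
  -- positive part
  set gp : ℝ → ℝ := Set.indicator (Set.Ioc (d / 2) (d + a)) g with hgp_def
  have hofReal : ∀ x, ENNReal.ofReal (g x) = ENNReal.ofReal (gp x) := by
    intro x
    by_cases hx : x ∈ Set.Ioc (d / 2) (d + a)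
    · rw [hgp_def, Set.indicator_of_mem hx]
    · rw [hgp_def, Set.indicator_of_notMem hx, ENNReal.ofReal_zero, ENNReal.ofReal_eq_zero]
      simp only [Set.mem_Ioc, not_and_or, not_lt, not_le] at hx
      rcases hx with hx | hx
      · have : hfun a (x - d) ≤ hfun a x := hfun_mono (by nlinarith)
        simp only [hg_def]; linarith
      · have h0 : hfun a (x - d) = 0 := hfun_zero (by nlinarith)
        have := hfun_nonneg a x
        simp only [hg_def]; linarith
  have hgp_nonneg : ∀ x, 0 ≤ gp x := by
    intro x
    apply Set.indicator_nonneg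
    intro y hy
    have : hfun a y ≤ hfun a (y - d) := hfun_mono (by nlinarith [hy.1])
    simp only [hg_def]; linarith
  have hgp_int : Integrable gp :=
    (hg_cont.integrableOn_Ioc).integrable_indicator measurableSet_Ioc
  have step3 : phi a d = ∫ x, gp x := by
    unfold phi
    rw [step12]
    rw [lintegral_congr hofReal, ← ofReal_integral_eq_lintegral_ofReal hgp_int
      (Filter.Eventually.of_forall hgp_nonneg), ENNReal.toReal_ofReal
      (integral_nonneg hgp_nonneg)]
  rw [step3, hgp_def, integral_indicator measurableSet_Ioc,
    ← intervalIntegral.integral_of_le (by linarith)]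
  -- now interval integral manipulations
  have hi1 : IntervalIntegrable (fun x => hfun a (x - d)) volume (d / 2) (d + a) :=
    ((hfun_cont a).comp (by fun_prop)).intervalIntegrable _ _
  have hi2 : ∀ u v : ℝ, IntervalIntegrable (hfun a) volume u v :=
    fun u v => (hfun_cont a).intervalIntegrable u v
  rw [hg_def]
  rw [intervalIntegral.integral_sub hi1 (hi2 _ _)]
  rw [intervalIntegral.integral_comp_sub_right (hfun a) d]
  have e1 : d / 2 - d = -(d / 2) := by ring
  have e2 : d + a - d = a := by ring
  rw [e1, e2]
  have split1 : ∫ x in (-(d / 2))..a, hfun a x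
      = (∫ x in (-(d / 2))..(d / 2), hfun a x) + ∫ x in (d / 2)..a, hfun a x :=
    (intervalIntegral.integral_add_adjacent_intervals (hi2 _ _) (hi2 _ _)).symm
  have split2 : ∫ x in (d / 2)..(d + a), hfun a x
      = (∫ x in (d / 2)..a, hfun a x) + ∫ x in a..(d + a), hfun a x :=
    (intervalIntegral.integral_add_adjacent_intervals (hi2 _ _) (hi2 _ _)).symm
  have hzero : ∫ x in a..(d + a), hfun a x = 0 := by
    rw [intervalIntegral.integral_congr (g := fun _ => (0 : ℝ))]
    · simp
    · intro x hx
      rw [Set.uIcc_of_le (by linarith)] at hx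
      exact hfun_zero (by nlinarith [hx.1])
  rw [split1, split2, hzero]
  ring

noncomputable def Hfun (a t : ℝ) : ℝ := ∫ x in (0:ℝ)..t, hfun a x

lemma Hfun_hasDerivAt (a t : ℝ) : HasDerivAt (Hfun a) (hfun a t) t :=
  intervalIntegral.integral_hasDerivAt_right ((hfun_cont a).intervalIntegrable _ _)
    ((hfun_cont a).stronglyMeasurableAtFilter _ _) (hfun_cont a).continuousAt

noncomputable def G (a d : ℝ) : ℝ := ∫ x in (-(d / 2))..(d / 2), hfun a x

lemma G_eq (a d : ℝ) : G a d = Hfun a (d / 2) - Hfun a (-(d / 2)) := by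
  unfold G Hfun
  rw [← intervalIntegral.integral_add_adjacent_intervals (b := 0)
    ((hfun_cont a).intervalIntegrable _ _) ((hfun_cont a).intervalIntegrable _ _),
    intervalIntegral.integral_symm]
  ring

lemma hfun_neg (a x : ℝ) : hfun a (-x) = hfun a x := by unfold hfun; rw [neg_sq]

lemma G_hasDerivAt (a d : ℝ) : HasDerivAt (G a) (hfun a (d / 2)) d := by
  have h1 : HasDerivAt (fun d : ℝ => Hfun a (d / 2)) (hfun a (d / 2) * (1 / 2)) d := by
    have := (Hfun_hasDerivAt a (d / 2)).comp d ((hasDerivAt_id d).div_const 2)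
    simpa [Function.comp_def] using this
  have h2 : HasDerivAt (fun d : ℝ => Hfun a (-(d / 2))) (hfun a (d / 2) * (-(1 / 2))) d := by
    have := (Hfun_hasDerivAt a (-(d / 2))).comp d (((hasDerivAt_id d).div_const 2).neg)
    rw [hfun_neg] at this
    simpa [Function.comp_def, Pi.neg_def] using this
  have h3 := h1.sub h2
  have he : (fun d : ℝ => Hfun a (d / 2) - Hfun a (-(d / 2))) = G a :=
    funext fun d => (G_eq a d).symm
  rw [show ((fun d : ℝ => Hfun a (d / 2)) - fun d : ℝ => Hfun a (-(d / 2))) = G a from he] at h3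
  rw [show hfun a (d / 2) = hfun a (d / 2) * (1 / 2) - hfun a (d / 2) * -(1 / 2) by ring]
  exact h3

lemma G_concave {a : ℝ} (ha : 0 < a) : ConcaveOn ℝ (Set.Icc 0 (2 * a)) (G a) := by
  have hdiff : ∀ d, HasDerivAt (G a) (hfun a (d / 2)) d := G_hasDerivAt a
  have hderiv : ∀ d, deriv (G a) d = hfun a (d / 2) := fun d => (hdiff d).deriv
  apply AntitoneOn.concaveOn_of_deriv (convex_Icc _ _)
  · exact fun x _ => ((hdiff x).differentiableAt.continuousAt).continuousWithinAt
  · exact fun x _ => ((hdiff x).differentiableAt).differentiableWithinAt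
  · intro x hx y hy hxy
    rw [interior_Icc] at hx hy
    rw [hderiv, hderiv]
    exact hfun_mono (by nlinarith [hx.1])

lemma integral_val {a : ℝ} (ha : 0 < a) : (∫ x in (-a)..a, hfun a x) = π * a ^ 2 := by
  have h1 : ∀ x : ℝ, hfun a (a * x) = 2 * a * Real.sqrt (1 - x ^ 2) := by
    intro x
    unfold hfun
    rw [show a ^ 2 - (a * x) ^ 2 = a ^ 2 * (1 - x ^ 2) by ring,
      Real.sqrt_mul (sq_nonneg a), Real.sqrt_sq ha.le]
    ring
  have h2 := intervalIntegral.integral_comp_mul_left (f := hfun a) (a := -1) (b := 1)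
    (c := a) ha.ne'
  have h3 : (∫ x in (-1 : ℝ)..1, hfun a (a * x)) = 2 * a * (π / 2) := by
    calc (∫ x in (-1 : ℝ)..1, hfun a (a * x))
        = ∫ x in (-1 : ℝ)..1, 2 * a * Real.sqrt (1 - x ^ 2) := by
          apply intervalIntegral.integral_congr
          intro x _
          exact h1 x
      _ = 2 * a * ∫ x in (-1 : ℝ)..1, Real.sqrt (1 - x ^ 2) :=
          intervalIntegral.integral_const_mul _ _
      _ = 2 * a * (π / 2) := by rw [integral_sqrt_one_sub_sq]
  rw [h3] at h2
  have h4 : a * (-1 : ℝ) = -a := by ring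
  have h5 : a * (1 : ℝ) = a := by ring
  rw [h4, h5] at h2
  rw [smul_eq_mul] at h2
  have h6 : ∫ x in (-a)..a, hfun a x = a * (2 * a * (π / 2)) := by
    rw [h2, ← mul_assoc, mul_inv_cancel₀ ha.ne', one_mul]
  rw [h6]
  ring

end Stmt10Aux

theorem stmt10 (a : ℝ) (ha : 0 < a) :
    ConcaveOn ℝ (Set.Icc 0 (2 * a)) (phi a) ∧ phi a 0 = 0 ∧ phi a (2 * a) = π * a ^ 2 := by
  refine ⟨?_, ?_, ?_⟩
  · have hG := Stmt10Aux.G_concave ha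
    refine ⟨convex_Icc _ _, ?_⟩
    intro x hx y hy α β hα hβ hab
    have hx' := hx
    have hy' := hy
    rw [Set.mem_Icc] at hx' hy'
    have hmem : α • x + β • y ∈ Set.Icc 0 (2 * a) := (convex_Icc _ _) hx hy hα hβ hab
    have hmem' := hmem
    rw [Set.mem_Icc] at hmem'
    rw [Stmt10Aux.phi_eq ha hx'.1 hx'.2, Stmt10Aux.phi_eq ha hy'.1 hy'.2,
      Stmt10Aux.phi_eq ha hmem'.1 hmem'.2]
    exact hG.2 hx hy hα hβ hab
  · unfold phi
    rw [Set.diff_self]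
    simp
  · rw [Stmt10Aux.phi_eq ha (by linarith) le_rfl]
    rw [show (2 * a) / 2 = a by ring]
    exact Stmt10Aux.integral_val ha
end

section
/- Let u ≥ 0 be a real number. For each natural number n ≥ 1, let (Ω_n, μ_n) be a probability space and let E_{n,1}, …, E_{n,n} be measurable events in Ω_n. Assume (i) exchangeability: for every κ with 1 ≤ κ ≤ n and every set of distinct indices i₁, …, i_κ ∈ {1, …, n}, μ_n(E_{n,i₁} ∩ ⋯ ∩ E_{n,i_κ}) = μ_n(E_{n,1} ∩ ⋯ ∩ E_{n,κ}); and (ii) for every fixed integer κ ≥ 1, n^κ · μ_n(E_{n,1} ∩ ⋯ ∩ E_{n,κ}) → u^κ as n → ∞. Let U_n(ω) be the number of indices i ∈ {1, …, n} with ω ∈ E_{n,i}. Then for every m ∈ ℕ, μ_n({ω : U_n(ω) = m}) → e^{−u}·u^m/m! as n → ∞; that is, U_n converges in distribution to a Poisson random variable with mean u. -/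
open MeasureTheory Filter Finset

lemma alt_sum_choose (N t : ℕ) :
    ∑ j ∈ Finset.range (t+1), (-1:ℝ)^j * ((N+1).choose j) = (-1)^t * (N.choose t) := by
  induction t with
  | zero => simp
  | succ t ih =>
    rw [Finset.sum_range_succ, ih, Nat.choose_succ_succ' N t]
    push_cast
    ring

lemma choose_prod (U m j : ℕ) :
    U.choose (m+j) * (m+j).choose m = U.choose m * (U-m).choose j := by
  by_cases h : m + j ≤ U
  · simpa [Nat.add_sub_cancel_left] using Nat.choose_mul (n := U) (Nat.le_add_right m j)
  · rw [Nat.choose_eq_zero_of_lt (by omega), Nat.zero_mul]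
    by_cases h2 : m ≤ U
    · rw [Nat.choose_eq_zero_of_lt (show U - m < j by omega), Nat.mul_zero]
    · rw [Nat.choose_eq_zero_of_lt (show U < m by omega), Nat.zero_mul]

lemma keyA (U m K : ℕ) (hmK : m ≤ K) :
    |(∑ κ ∈ Finset.Icc m K, (-1:ℝ)^(κ-m) * (κ.choose m) * (U.choose κ))
      - (if U = m then 1 else 0)|
    ≤ ((K+1).choose m) * (U.choose (K+1)) := by
  have hre : ∑ κ ∈ Finset.Icc m K, (-1:ℝ)^(κ-m) * (κ.choose m) * (U.choose κ)
      = (U.choose m : ℝ) * ∑ j ∈ Finset.range (K+1-m), (-1:ℝ)^j * ((U-m).choose j) := by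
    rw [← Finset.Ico_add_one_right_eq_Icc, Finset.sum_Ico_eq_sum_range, Finset.mul_sum]
    refine Finset.sum_congr rfl fun j _ => ?_
    have h1 : m + j - m = j := by omega
    have h2 : (U.choose (m+j) * (m+j).choose m : ℝ) = (U.choose m * (U-m).choose j : ℝ) := by
      exact_mod_cast congrArg (Nat.cast (R := ℝ)) (choose_prod U m j)
    push_cast at h2 ⊢
    rw [h1]
    linear_combination (-1:ℝ)^j * h2
  rw [hre]
  rcases lt_trichotomy U m with hUm | hUm | hUm
  · rw [Nat.choose_eq_zero_of_lt hUm, if_neg (by omega)]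
    simp
    positivity
  · subst hUm
    rw [if_pos rfl, Nat.choose_self, Nat.sub_self]
    have h0 : ∑ j ∈ Finset.range (K+1-U), (-1:ℝ)^j * ((0:ℕ).choose j) = 1 := by
      rw [Finset.sum_eq_single 0]
      · simp
      · intro j _ hj
        rw [Nat.choose_eq_zero_of_lt (show 0 < j by omega)]
        simp
      · intro h; exact absurd (Finset.mem_range.2 (show 0 < K+1-U by omega)) h
    rw [h0, Nat.choose_eq_zero_of_lt (show U < K+1 by omega)]
    simp
  · rw [if_neg (by omega), sub_zero]
    have hN : U - m = (U - m - 1) + 1 := by omega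
    have ht : K + 1 - m = (K - m) + 1 := by omega
    rw [ht, hN, alt_sum_choose]
    rw [abs_mul, abs_mul, abs_pow, abs_neg, abs_one, one_pow, one_mul,
      Nat.abs_cast, Nat.abs_cast]
    by_cases hKU : U ≤ K
    · rw [Nat.choose_eq_zero_of_lt (show U - m - 1 < K - m by omega)]
      simp
      positivity
    · have key : U.choose (K+1) * (K+1).choose m = U.choose m * (U-m).choose (K+1-m) :=
        Nat.choose_mul (by omega)
      have pascal : (U - m - 1).choose (K - m) ≤ (U - m).choose (K + 1 - m) := by
        rw [hN, ht, Nat.choose_succ_succ']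
        exact Nat.le_add_right _ _
      have hfin : U.choose m * (U - m - 1).choose (K - m) ≤ (K+1).choose m * U.choose (K+1) := by
        calc U.choose m * (U - m - 1).choose (K - m)
            ≤ U.choose m * (U-m).choose (K+1-m) := Nat.mul_le_mul_left _ pascal
          _ = (K+1).choose m * U.choose (K+1) := by rw [← key]; ring
      exact_mod_cast hfin

section Meas
variable {Ω : Type} [MeasurableSpace Ω] (μ : Measure Ω) [IsProbabilityMeasure μ]
  {n : ℕ} {E : ℕ → Set Ω}

lemma pointwise_choose (κ : ℕ) (ω : Ω) [DecidablePred fun i : Fin n => ω ∈ E ↑i] :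
    (((Finset.univ.filter fun i : Fin n => ω ∈ E ↑i).card.choose κ : ℕ) : ℝ)
      = ∑ S ∈ Finset.powersetCard κ (Finset.univ : Finset (Fin n)),
          Set.indicator (⋂ i ∈ S, E ↑i) (fun _ => (1:ℝ)) ω := by
  classical
  set F := Finset.univ.filter fun i : Fin n => ω ∈ E ↑i with hF
  have h1 : ∀ S : Finset (Fin n), Set.indicator (⋂ i ∈ S, E ↑i) (fun _ => (1:ℝ)) ω
      = if S ⊆ F then 1 else 0 := by
    intro S
    rw [Set.indicator_apply]
    congr 1
    simp only [Set.mem_iInter, eq_iff_iff]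
    constructor
    · intro h i hi
      simp only [hF, Finset.mem_filter, Finset.mem_univ, true_and]
      exact h i hi
    · intro h i hi
      have h2 := h hi
      simp only [hF, Finset.mem_filter] at h2
      exact h2.2
  simp only [h1]
  rw [Finset.sum_boole]
  have h3 : (Finset.powersetCard κ (Finset.univ : Finset (Fin n))).filter (· ⊆ F)
      = Finset.powersetCard κ F := by
    ext S
    simp [Finset.mem_powersetCard, Finset.subset_univ]
    tauto
  rw [h3, Finset.card_powersetCard]

end Meas

lemma main_ineq {Ω : Type} [MeasurableSpace Ω] (μ : Measure Ω) [IsProbabilityMeasure μ]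
    (n : ℕ) (E : ℕ → Set Ω) (hE : ∀ i, MeasurableSet (E i)) (m K : ℕ) (hmK : m ≤ K) :
    |(μ {ω | Nat.card {i : Fin n // ω ∈ E ↑i} = m}).toReal -
      ∑ κ ∈ Finset.Icc m K, (-1:ℝ)^(κ-m) * (κ.choose m) *
        ∑ S ∈ Finset.powersetCard κ (Finset.univ : Finset (Fin n)), (μ (⋂ i ∈ S, E ↑i)).toReal|
    ≤ ((K+1).choose m) *
      ∑ S ∈ Finset.powersetCard (K+1) (Finset.univ : Finset (Fin n)), (μ (⋂ i ∈ S, E ↑i)).toReal := by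
  classical
  set U : Ω → ℕ := fun ω => (Finset.univ.filter fun i : Fin n => ω ∈ E ↑i).card with hUdef
  have hcount : ∀ ω, Nat.card {i : Fin n // ω ∈ E ↑i} = U ω := by
    intro ω
    rw [Nat.card_eq_fintype_card, Fintype.card_subtype]
  have hUmeas : Measurable U := by
    have hUeq : U = fun ω => ∑ i : Fin n, if ω ∈ E ↑i then 1 else 0 := by
      funext ω
      exact Finset.card_filter _ _
    rw [hUeq]
    exact Finset.measurable_sum _ fun i _ =>
      Measurable.ite (hE ↑i) measurable_const measurable_const
  have hSmeas : ∀ (S : Finset (Fin n)), MeasurableSet (⋂ i ∈ S, E ↑i) :=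
    fun S => S.measurableSet_biInter (fun i _ => hE ↑i)
  -- indicator functions
  have hindint : ∀ (S : Finset (Fin n)),
      Integrable (Set.indicator (⋂ i ∈ S, E ↑i) (fun _ => (1:ℝ))) μ :=
    fun S => (integrable_const (1:ℝ)).indicator (hSmeas S)
  have hcint : ∀ κ : ℕ, Integrable (fun ω => ((U ω).choose κ : ℝ)) μ := by
    intro κ
    have : (fun ω => ((U ω).choose κ : ℝ)) = fun ω =>
        ∑ S ∈ Finset.powersetCard κ (Finset.univ : Finset (Fin n)),
          Set.indicator (⋂ i ∈ S, E ↑i) (fun _ => (1:ℝ)) ω := by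
      funext ω
      exact pointwise_choose κ ω
    rw [this]
    exact integrable_finset_sum _ fun S _ => hindint S
  have hcval : ∀ κ : ℕ, ∫ ω, ((U ω).choose κ : ℝ) ∂μ
      = ∑ S ∈ Finset.powersetCard κ (Finset.univ : Finset (Fin n)), (μ (⋂ i ∈ S, E ↑i)).toReal := by
    intro κ
    have h1 : ∫ ω, ((U ω).choose κ : ℝ) ∂μ = ∫ ω,
        (∑ S ∈ Finset.powersetCard κ (Finset.univ : Finset (Fin n)),
          Set.indicator (⋂ i ∈ S, E ↑i) (fun _ => (1:ℝ)) ω) ∂μ := by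
      congr 1
      funext ω
      exact pointwise_choose κ ω
    rw [h1, integral_finset_sum _ fun S _ => hindint S]
    refine Finset.sum_congr rfl fun S _ => ?_
    have := integral_indicator_one (μ := μ) (hSmeas S)
    simpa [measureReal_def, Pi.one_def] using this
  -- the event
  have hAset : {ω | Nat.card {i : Fin n // ω ∈ E ↑i} = m} = {ω | U ω = m} := by
    ext ω; simp only [Set.mem_setOf_eq, hcount ω]
  have hAmeas : MeasurableSet {ω | U ω = m} := hUmeas (measurableSet_singleton m)
  have hfint : Integrable (Set.indicator {ω | U ω = m} (fun _ => (1:ℝ))) μ :=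
    (integrable_const (1:ℝ)).indicator hAmeas
  have hfval : ∫ ω, Set.indicator {ω | U ω = m} (fun _ => (1:ℝ)) ω ∂μ
      = (μ {ω | U ω = m}).toReal := by
    have := integral_indicator_one (μ := μ) hAmeas
    simpa [measureReal_def, Pi.one_def] using this
  -- g
  set g : Ω → ℝ := fun ω => ∑ κ ∈ Finset.Icc m K, (-1:ℝ)^(κ-m) * (κ.choose m) * ((U ω).choose κ : ℝ)
    with hgdef
  have hgint : Integrable g μ :=
    integrable_finset_sum _ fun κ _ => ((hcint κ).const_mul _)
  have hgval : ∫ ω, g ω ∂μ = ∑ κ ∈ Finset.Icc m K, (-1:ℝ)^(κ-m) * (κ.choose m) *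
      ∑ S ∈ Finset.powersetCard κ (Finset.univ : Finset (Fin n)), (μ (⋂ i ∈ S, E ↑i)).toReal := by
    rw [integral_finset_sum _ fun κ _ => ((hcint κ).const_mul _)]
    refine Finset.sum_congr rfl fun κ _ => ?_
    rw [integral_const_mul _ _, hcval κ]
  -- pointwise bound
  set f : Ω → ℝ := Set.indicator {ω | U ω = m} (fun _ => (1:ℝ)) with hfdef
  have hbound : ∀ ω, |f ω - g ω| ≤ ((K+1).choose m : ℝ) * ((U ω).choose (K+1) : ℝ) := by
    intro ω
    have hfω : f ω = if U ω = m then 1 else 0 := by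
      rw [hfdef, Set.indicator_apply]
      simp
    rw [hfω, abs_sub_comm]
    exact keyA (U ω) m K hmK
  rw [hAset, ← hfval, ← hgval]
  calc |∫ ω, f ω ∂μ - ∫ ω, g ω ∂μ| = |∫ ω, (f ω - g ω) ∂μ| := by rw [integral_sub hfint hgint]
    _ ≤ ∫ ω, |f ω - g ω| ∂μ := by simpa [Real.norm_eq_abs] using norm_integral_le_integral_norm (μ := μ) (fun ω => f ω - g ω)
    _ ≤ ∫ ω, ((K+1).choose m : ℝ) * ((U ω).choose (K+1) : ℝ) ∂μ := by
        refine integral_mono (hfint.sub hgint).abs ((hcint (K+1)).const_mul _) hbound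
    _ = ((K+1).choose m) * ∑ S ∈ Finset.powersetCard (K+1) (Finset.univ : Finset (Fin n)),
        (μ (⋂ i ∈ S, E ↑i)).toReal := by
        rw [integral_const_mul _ _, hcval (K+1)]

lemma choose_ratio_lim (κ : ℕ) :
    Tendsto (fun n : ℕ => ((n.choose κ : ℝ) * κ.factorial) / (n:ℝ)^κ) atTop (nhds 1) := by
  have hev : ∀ᶠ n : ℕ in atTop, ((n.choose κ : ℝ) * κ.factorial) / (n:ℝ)^κ
      = ∏ i ∈ Finset.range κ, (1 - (i:ℝ)/n) := by
    filter_upwards [eventually_ge_atTop κ, eventually_ge_atTop 1] with n hn h1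
    have hn0 : (n:ℝ) ≠ 0 := by positivity
    have hd : ((n.choose κ : ℝ) * κ.factorial) = ∏ i ∈ Finset.range κ, ((n:ℝ) - i) := by
      have h2 : (n.descFactorial κ : ℝ) = (n.choose κ : ℝ) * κ.factorial := by
        rw [Nat.descFactorial_eq_factorial_mul_choose]
        push_cast; ring
      rw [← h2, Nat.descFactorial_eq_prod_range]
      push_cast
      refine Finset.prod_congr rfl fun i hi => ?_
      rw [Nat.cast_sub (by have := Finset.mem_range.1 hi; omega : i ≤ n)]
    rw [hd]
    rw [Finset.prod_congr rfl (fun i (hi : i ∈ Finset.range κ) =>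
      show (1 - (i:ℝ)/n) = ((n:ℝ) - i)/n by field_simp), Finset.prod_div_distrib,
      Finset.prod_const, Finset.card_range]
  refine Tendsto.congr' (hev.mono fun n h => h.symm) ?_
  have : Tendsto (fun n : ℕ => ∏ i ∈ Finset.range κ, (1 - (i:ℝ)/n)) atTop
      (nhds (∏ i ∈ Finset.range κ, 1)) := by
    refine tendsto_finset_prod _ fun i _ => ?_
    simpa using tendsto_const_nhds.sub (tendsto_const_div_atTop_nhds_zero_nat (i:ℝ))
  simpa using this

lemma choose_factorial_id (u : ℝ) (m j : ℕ) :
    ((m+j).choose m : ℝ) * (u^(m+j) / (m+j).factorial)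
      = (u^m / m.factorial) * (u^j / j.factorial) := by
  have hc : ((m+j).choose m : ℝ) * m.factorial * j.factorial = (m+j).factorial := by
    have h := Nat.choose_mul_factorial_mul_factorial (Nat.le_add_right m j)
    rw [Nat.add_sub_cancel_left] at h
    exact_mod_cast h
  have hm : (m.factorial : ℝ) ≠ 0 := Nat.cast_ne_zero.2 m.factorial_ne_zero
  have hj : (j.factorial : ℝ) ≠ 0 := Nat.cast_ne_zero.2 j.factorial_ne_zero
  have hmj : ((m+j).factorial : ℝ) ≠ 0 := Nat.cast_ne_zero.2 (m+j).factorial_ne_zero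
  field_simp
  rw [pow_add]
  linear_combination (u^m * u^j) * hc

lemma L_lim (u : ℝ) (m : ℕ) :
    Tendsto (fun t : ℕ => ∑ κ ∈ Finset.Icc m (m+t),
        (-1:ℝ)^(κ-m) * (κ.choose m) * (u^κ / κ.factorial)) atTop
      (nhds (Real.exp (-u) * u^m / m.factorial)) := by
  have hsum : HasSum (fun j : ℕ => (-u)^j / j.factorial) (Real.exp (-u)) := by
    rw [Real.exp_eq_exp_ℝ]
    exact NormedSpace.expSeries_div_hasSum_exp (-u)
  have h1 : Tendsto (fun t : ℕ => ∑ j ∈ Finset.range (t+1), (-u)^j / j.factorial) atTop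
      (nhds (Real.exp (-u))) :=
    hsum.tendsto_sum_nat.comp (tendsto_add_atTop_nat 1)
  have h2 := h1.const_mul (u^m / m.factorial)
  have heq : ∀ t : ℕ, (u^m / m.factorial) * ∑ j ∈ Finset.range (t+1), (-u)^j / j.factorial
      = ∑ κ ∈ Finset.Icc m (m+t), (-1:ℝ)^(κ-m) * (κ.choose m) * (u^κ / κ.factorial) := by
    intro t
    rw [← Finset.Ico_add_one_right_eq_Icc, Finset.sum_Ico_eq_sum_range, Finset.mul_sum]
    have ht : m + t + 1 - m = t + 1 := by omega
    rw [ht]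
    refine Finset.sum_congr rfl fun j _ => ?_
    have h3 : m + j - m = j := by omega
    have h4 := choose_factorial_id u m j
    rw [h3]
    have h5 : (-u)^j = (-1:ℝ)^j * u^j := by rw [neg_pow]
    rw [h5]
    rw [pow_add] at h4
    linear_combination (-(-1:ℝ)^j) * h4
  have h6 : (fun t : ℕ => (u^m / m.factorial) * ∑ j ∈ Finset.range (t+1), (-u)^j / j.factorial)
      = fun t : ℕ => ∑ κ ∈ Finset.Icc m (m+t), (-1:ℝ)^(κ-m) * (κ.choose m) * (u^κ / κ.factorial) :=
    funext heq
  rw [h6] at h2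
  have : u^m / m.factorial * Real.exp (-u) = Real.exp (-u) * u^m / m.factorial := by ring
  rwa [this] at h2

lemma err_lim (u : ℝ) (m : ℕ) :
    Tendsto (fun t : ℕ => (((m+t+1).choose m : ℝ)) * (u^(m+t+1) / (m+t+1).factorial)) atTop
      (nhds 0) := by
  have h1 : Tendsto (fun j : ℕ => u^j / j.factorial) atTop (nhds 0) :=
    FloorSemiring.tendsto_pow_div_factorial_atTop u
  have h2 := (h1.comp (tendsto_add_atTop_nat 1)).const_mul (u^m / m.factorial)
  rw [mul_zero] at h2
  refine h2.congr fun t => ?_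
  have h4 := choose_factorial_id u m (t+1)
  simp only [Function.comp]
  rw [← add_assoc] at h4
  linarith [h4]

theorem stmt18 (u : ℝ) (hu : 0 ≤ u)
    (Ω : ℕ → Type) (mΩ : ∀ n, MeasurableSpace (Ω n))
    (μ : ∀ n, Measure (Ω n)) (hμ : ∀ n, IsProbabilityMeasure (μ n))
    (E : ∀ n, ℕ → Set (Ω n)) (hE : ∀ n i, MeasurableSet (E n i))
    (hexch : ∀ n, 1 ≤ n → ∀ κ : ℕ, 1 ≤ κ → κ ≤ n → ∀ ι : Fin κ → ℕ,
      Function.Injective ι → (∀ j, ι j < n) →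
      μ n (⋂ j : Fin κ, E n (ι j)) = μ n (⋂ j : Fin κ, E n j))
    (hlim : ∀ κ : ℕ, 1 ≤ κ →
      Tendsto (fun n : ℕ => (n : ℝ) ^ κ * (μ n (⋂ j : Fin κ, E n j)).toReal)
        atTop (nhds (u ^ κ))) :
    ∀ m : ℕ,
      Tendsto (fun n : ℕ =>
          (μ n {ω | Nat.card {i : Fin n // ω ∈ E n i} = m}).toReal)
        atTop (nhds (Real.exp (-u) * u ^ m / m.factorial)) := by
  intro m
  have hμ' := hμ
  set p : ℕ → ℕ → ℝ := fun n κ => (μ n (⋂ j : Fin κ, E n j)).toReal with hpdef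
  set b : ℕ → ℕ → ℝ := fun n κ => (n.choose κ : ℝ) * p n κ with hbdef
  -- limit of binomial moments
  have hb : ∀ κ : ℕ, Tendsto (fun n => b n κ) atTop (nhds (u^κ / κ.factorial)) := by
    intro κ
    rcases Nat.eq_zero_or_pos κ with h0 | hκ
    · subst h0
      have hone : ∀ n : ℕ, b n 0 = 1 := by
        intro n
        simp only [hbdef, hpdef, Nat.choose_zero_right, Nat.cast_one, one_mul]
        rw [Set.iInter_of_empty]
        simp [measure_univ]
      simp only [pow_zero, Nat.factorial_zero, Nat.cast_one]
      rw [show (1:ℝ)/1 = 1 by norm_num]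
      exact Tendsto.congr (fun n => (hone n).symm) tendsto_const_nhds
    · have h1 := choose_ratio_lim κ
      have h2 := hlim κ hκ
      have h3 := (h1.mul h2).div_const (κ.factorial : ℝ)
      rw [one_mul] at h3
      refine Tendsto.congr' ?_ h3
      filter_upwards [eventually_ge_atTop 1] with n hn
      have hn0 : (n:ℝ)^κ ≠ 0 := by
        have : (0:ℝ) < n := by exact_mod_cast hn
        positivity
      have hκf : (κ.factorial : ℝ) ≠ 0 := Nat.cast_ne_zero.2 κ.factorial_ne_zero
      simp only [hbdef]
      field_simp
      ring
  -- exchangeability: sums over powersetCard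
  have hSsum : ∀ n : ℕ, 1 ≤ n → ∀ κ : ℕ, κ ≤ n →
      ∑ S ∈ Finset.powersetCard κ (Finset.univ : Finset (Fin n)),
        (μ n (⋂ i ∈ S, E n ↑i)).toReal = b n κ := by
    intro n hn κ hκn
    have hcard : ∀ S ∈ Finset.powersetCard κ (Finset.univ : Finset (Fin n)),
        (μ n (⋂ i ∈ S, E n ↑i)).toReal = p n κ := by
      intro S hS
      have hSc : S.card = κ := (Finset.mem_powersetCard.1 hS).2
      rcases Nat.eq_zero_or_pos κ with h0 | hκpos
      · subst h0
        have hSe : S = ∅ := Finset.card_eq_zero.1 hSc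
        subst hSe
        simp only [hpdef]
        rw [show ⋂ i ∈ (∅ : Finset (Fin n)), E n ↑i = Set.univ by simp,
          Set.iInter_of_empty]
      · set ι : Fin κ → ℕ := fun j => ((S.orderEmbOfFin hSc j : Fin n) : ℕ) with hιdef
        have hinj : Function.Injective ι := fun a c hac =>
          (S.orderEmbOfFin hSc).injective (Fin.val_injective hac)
        have hlt : ∀ j, ι j < n := fun j => (S.orderEmbOfFin hSc j).isLt
        have hset : ⋂ i ∈ S, E n ↑i = ⋂ j : Fin κ, E n (ι j) := by
          ext ω
          simp only [Set.mem_iInter]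
          constructor
          · intro h j
            exact h _ (S.orderEmbOfFin_mem hSc j)
          · intro h i hi
            have hmem : i ∈ Set.range (S.orderEmbOfFin hSc) := by
              rw [Finset.range_orderEmbOfFin]
              exact hi
            obtain ⟨j, hj⟩ := hmem
            have h2 := h j
            simp only [hιdef] at h2
            rw [hj] at h2
            exact h2
        simp only [hpdef]
        rw [hset, hexch n hn κ hκpos hκn ι hinj hlt]
    rw [Finset.sum_congr rfl hcard, Finset.sum_const, Finset.card_powersetCard,
      Finset.card_univ, Fintype.card_fin, nsmul_eq_mul]
  -- main bound for n ≥ K+1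
  have hbig : ∀ K : ℕ, m ≤ K → ∀ n : ℕ, K + 1 ≤ n →
      |(μ n {ω | Nat.card {i : Fin n // ω ∈ E n i} = m}).toReal -
        ∑ κ ∈ Finset.Icc m K, (-1:ℝ)^(κ-m) * (κ.choose m) * b n κ|
      ≤ ((K+1).choose m) * b n (K+1) := by
    intro K hmK n hn
    have h1 := main_ineq (μ n) n (E n) (hE n) m K hmK
    have hn1 : 1 ≤ n := by omega
    rw [hSsum n hn1 (K+1) hn] at h1
    have h2 : ∑ κ ∈ Finset.Icc m K, (-1:ℝ)^(κ-m) * (κ.choose m) *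
        ∑ S ∈ Finset.powersetCard κ (Finset.univ : Finset (Fin n)),
          (μ n (⋂ i ∈ S, E n ↑i)).toReal
        = ∑ κ ∈ Finset.Icc m K, (-1:ℝ)^(κ-m) * (κ.choose m) * b n κ := by
      refine Finset.sum_congr rfl fun κ hκ => ?_
      rw [hSsum n hn1 κ (by have := (Finset.mem_Icc.1 hκ).2; omega)]
    rw [h2] at h1
    exact h1
  -- epsilon argument
  rw [Metric.tendsto_atTop]
  intro ε hε
  obtain ⟨T1, hT1⟩ := Metric.tendsto_atTop.1 (L_lim u m) (ε/4) (by linarith)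
  obtain ⟨T2, hT2⟩ := Metric.tendsto_atTop.1 (err_lim u m) (ε/4) (by linarith)
  set t := max T1 T2 with htdef
  set K := m + t with hKdef
  have hmK : m ≤ K := Nat.le_add_right m t
  have hLc : |(∑ κ ∈ Finset.Icc m K, (-1:ℝ)^(κ-m) * (κ.choose m) * (u^κ / κ.factorial))
      - Real.exp (-u) * u^m / m.factorial| < ε/4 := by
    have := hT1 t (le_max_left _ _)
    rwa [Real.dist_eq] at this
  have herr : ((K+1).choose m : ℝ) * (u^(K+1) / (K+1).factorial) < ε/4 := by
    have h := hT2 t (le_max_right _ _)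
    rw [Real.dist_eq, sub_zero] at h
    calc ((K+1).choose m : ℝ) * (u^(K+1) / (K+1).factorial)
        ≤ |((m+t+1).choose m : ℝ) * (u^(m+t+1) / (m+t+1).factorial)| := by
          rw [hKdef]
          exact le_abs_self _
      _ < ε/4 := h
  have hS : Tendsto (fun n => ∑ κ ∈ Finset.Icc m K, (-1:ℝ)^(κ-m) * (κ.choose m) * b n κ)
      atTop (nhds (∑ κ ∈ Finset.Icc m K, (-1:ℝ)^(κ-m) * (κ.choose m) * (u^κ / κ.factorial))) := by
    refine tendsto_finset_sum _ fun κ _ => ?_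
    have := (hb κ).const_mul ((-1:ℝ)^(κ-m) * (κ.choose m))
    simpa [mul_assoc] using this
  obtain ⟨N1, hN1⟩ := Metric.tendsto_atTop.1 hS (ε/4) (by linarith)
  have hbK : Tendsto (fun n => ((K+1).choose m : ℝ) * b n (K+1)) atTop
      (nhds (((K+1).choose m : ℝ) * (u^(K+1) / (K+1).factorial))) :=
    (hb (K+1)).const_mul _
  obtain ⟨N2, hN2⟩ := Metric.tendsto_atTop.1 hbK (ε/4) (by linarith)
  refine ⟨max (max N1 N2) (K+1), fun n hn => ?_⟩
  have hnN1 : N1 ≤ n := le_trans (le_trans (le_max_left _ _) (le_max_left _ _)) hn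
  have hnN2 : N2 ≤ n := le_trans (le_trans (le_max_right _ _) (le_max_left _ _)) hn
  have hnK : K + 1 ≤ n := le_trans (le_max_right _ _) hn
  have h1 := hbig K hmK n hnK
  have h2 : |(∑ κ ∈ Finset.Icc m K, (-1:ℝ)^(κ-m) * (κ.choose m) * b n κ)
      - ∑ κ ∈ Finset.Icc m K, (-1:ℝ)^(κ-m) * (κ.choose m) * (u^κ / κ.factorial)| < ε/4 := by
    have := hN1 n hnN1
    rwa [Real.dist_eq] at this
  have h3 : ((K+1).choose m : ℝ) * b n (K+1) < ε/2 := by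
    have h4 := hN2 n hnN2
    rw [Real.dist_eq] at h4
    have h5 := abs_sub_abs_le_abs_sub (((K+1).choose m : ℝ) * b n (K+1))
      (((K+1).choose m : ℝ) * (u^(K+1) / (K+1).factorial))
    have h6 : ((K+1).choose m : ℝ) * b n (K+1) ≤ |((K+1).choose m : ℝ) * b n (K+1)| :=
      le_abs_self _
    have h7 : |((K+1).choose m : ℝ) * (u^(K+1) / (K+1).factorial)|
        = ((K+1).choose m : ℝ) * (u^(K+1) / (K+1).factorial) := by
      rw [abs_of_nonneg]
      positivity
    linarith
  rw [Real.dist_eq]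
  calc |(μ n {ω | Nat.card {i : Fin n // ω ∈ E n i} = m}).toReal
        - Real.exp (-u) * u^m / m.factorial|
      ≤ |(μ n {ω | Nat.card {i : Fin n // ω ∈ E n i} = m}).toReal -
          ∑ κ ∈ Finset.Icc m K, (-1:ℝ)^(κ-m) * (κ.choose m) * b n κ|
        + |(∑ κ ∈ Finset.Icc m K, (-1:ℝ)^(κ-m) * (κ.choose m) * b n κ)
          - ∑ κ ∈ Finset.Icc m K, (-1:ℝ)^(κ-m) * (κ.choose m) * (u^κ / κ.factorial)|
        + |(∑ κ ∈ Finset.Icc m K, (-1:ℝ)^(κ-m) * (κ.choose m) * (u^κ / κ.factorial))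
          - Real.exp (-u) * u^m / m.factorial| := by
        have := abs_sub_le ((μ n {ω | Nat.card {i : Fin n // ω ∈ E n i} = m}).toReal)
          (∑ κ ∈ Finset.Icc m K, (-1:ℝ)^(κ-m) * (κ.choose m) * b n κ)
          (Real.exp (-u) * u^m / m.factorial)
        have h8 := abs_sub_le (∑ κ ∈ Finset.Icc m K, (-1:ℝ)^(κ-m) * (κ.choose m) * b n κ)
          (∑ κ ∈ Finset.Icc m K, (-1:ℝ)^(κ-m) * (κ.choose m) * (u^κ / κ.factorial))
          (Real.exp (-u) * u^m / m.factorial)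
        linarith
    _ < ε/2 + ε/4 + ε/4 := by
        refine add_lt_add (add_lt_add_of_le_of_lt (le_trans h1 (le_of_lt h3)) h2) hLc
    _ = ε := by ring
end
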